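/- Assume the transition-constrained dual LP is feasible. Let (d*, p*) be an optimal solution of the transition-constrained dual LP with derived policy π*(a|s) = p*(s,a)/d*(s), and let (v*, q*, r_c*) be an optimal solution of the transition-constrained primal LP. Then (i) v* and q* satisfy the Bellman optimality equations for the modified reward r*_ATC(s,a,s') = r(s,a,s') − r_c*(s,a) c(s,a,s'), so they equal the optimal value functions of the MDP with reward r*_ATC; (ii) π* is greedy with respect to q*: for every state s, every action a with π*(a|s) > 0 satisfies a ∈ argmax_{a'} q*(s,a'); and (iii) r_c*(s,a) = 0 for every (s,a) with p*(s,a) > 0 and c̄(s,a) < 0. -/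

import Mathlib

open Finset

section MDPDefs

variable {S A : Type*}

/-- A (stationary, stochastic) policy on finite state/action spaces. -/
def IsPolicy [Fintype A] (π : S → A → ℝ) : Prop :=
  (∀ s a, 0 ≤ π s a) ∧ ∀ s, ∑ a, π s a = 1

/-- `d` is the (discounted) state visitation density of the policy `π`:
it satisfies `d(s) = (1-γ)ι(s) + γ Σ_{s',a'} d(s') π(a'|s') τ(s|s',a')`. -/
def IsVisit [Fintype S] [Fintype A] (ι : S → ℝ) (τ : S → A → S → ℝ) (γ : ℝ)
    (π : S → A → ℝ) (d : S → ℝ) : Prop :=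
  ∀ s, d s = (1 - γ) * ι s + γ * ∑ s', ∑ a', d s' * π s' a' * τ s' a' s

/-- Feasibility for the value-learning dual LP. -/
def DualFeas [Fintype S] [Fintype A] (ι : S → ℝ) (τ : S → A → S → ℝ) (γ : ℝ)
    (d : S → ℝ) (p : S → A → ℝ) : Prop :=
  (∀ s, ∑ a, p s a = d s) ∧
  (∀ s, d s = (1 - γ) * ι s + γ * ∑ s', ∑ a', p s' a' * τ s' a' s) ∧
  ∀ s a, 0 ≤ p s a

/-- The dual objective: the average reward under the state-action density `p`,
`Σ_{s,a} p(s,a) Σ_{s'} τ(s'|s,a) r(s,a,s')`. -/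
def DualObj [Fintype S] [Fintype A] (τ : S → A → S → ℝ) (r : S → A → S → ℝ)
    (p : S → A → ℝ) : ℝ :=
  ∑ s, ∑ a, p s a * ∑ s', τ s a s' * r s a s'

/-- The standing MDP assumptions: `ι` is an everywhere-positive initial-state
distribution, `τ(·|s,a)` are transition probabilities and `γ ∈ [0,1)`. -/
def IsMDP [Fintype S] [Fintype A] (ι : S → ℝ) (τ : S → A → S → ℝ) (γ : ℝ) : Prop :=
  (∀ s, 0 < ι s) ∧ (∑ s, ι s = 1) ∧
  (∀ s a s', 0 ≤ τ s a s') ∧ (∀ s a, ∑ s', τ s a s' = 1) ∧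
  0 ≤ γ ∧ γ < 1

end MDPDefs




namespace ATCAux

variable {S A : Type*} [Fintype S] [Fintype A] [Nonempty S] [Nonempty A]

noncomputable section

variable (τ : S → A → S → ℝ) (γ : ℝ)

/-- Bellman operator for a deterministic policy. -/
def Tpol (w : S → A → ℝ) (π : S → A) (v : S → ℝ) : S → ℝ :=
  fun s => w s (π s) + γ * ∑ s', τ s (π s) s' * v s'

/-- Bellman optimality operator. -/
def Topt (w : S → A → ℝ) (v : S → ℝ) : S → ℝ :=
  fun s => univ.sup' univ_nonempty (fun a => w s a + γ * ∑ s', τ s a s' * v s')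

variable {τ γ}
variable (hτ0 : ∀ s a s', 0 ≤ τ s a s') (hτ1 : ∀ s a, ∑ s', τ s a s' = 1)
  (hγ0 : 0 ≤ γ) (hγ1 : γ < 1)

include hτ0 hτ1 in

set_option linter.unusedSectionVars false in
theorem sum_diff_le {v u : S → ℝ} {M : ℝ} (h : ∀ s, v s - u s ≤ M) (s : S) (a : A) :
    (∑ s', τ s a s' * v s') - (∑ s', τ s a s' * u s') ≤ M := by
  rw [← Finset.sum_sub_distrib]
  calc ∑ s', (τ s a s' * v s' - τ s a s' * u s')
      = ∑ s', τ s a s' * (v s' - u s') := by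
        refine Finset.sum_congr rfl fun s' _ => by ring
    _ ≤ ∑ s', τ s a s' * M := by
        refine Finset.sum_le_sum fun s' _ =>
          mul_le_mul_of_nonneg_left (h s') (hτ0 s a s')
    _ = M := by rw [← Finset.sum_mul, hτ1, one_mul]

include hτ0 hτ1 hγ0 in
set_option linter.unusedSectionVars false in
theorem Tpol_diff_le {w : S → A → ℝ} {π : S → A} {v u : S → ℝ} {M : ℝ}
    (h : ∀ s, v s - u s ≤ M) (s : S) :
    Tpol τ γ w π v s - Tpol τ γ w π u s ≤ γ * M := by
  have := sum_diff_le hτ0 hτ1 h s (π s)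
  simp only [Tpol]
  nlinarith [this, mul_le_mul_of_nonneg_left this hγ0]

include hτ0 hτ1 hγ0 in
set_option linter.unusedSectionVars false in
theorem Topt_diff_le {w : S → A → ℝ} {v u : S → ℝ} {M : ℝ}
    (h : ∀ s, v s - u s ≤ M) (s : S) :
    Topt τ γ w v s - Topt τ γ w u s ≤ γ * M := by
  simp only [Topt, sub_le_iff_le_add]
  refine Finset.sup'_le _ _ fun a _ => ?_
  have h1 := sum_diff_le hτ0 hτ1 h s a
  have h2 := Finset.le_sup' (fun a => w s a + γ * ∑ s', τ s a s' * u s') (mem_univ a)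
  nlinarith [h1, h2, mul_le_mul_of_nonneg_left h1 hγ0]

include hτ0 hτ1 hγ0 hγ1 in
set_option linter.unusedSectionVars false in
theorem contracting_Tpol (w : S → A → ℝ) (π : S → A) :
    ContractingWith ⟨γ, hγ0⟩ (Tpol τ γ w π) := by
  constructor
  · exact_mod_cast hγ1
  · refine LipschitzWith.of_dist_le_mul fun v u => ?_
    rw [dist_pi_le_iff (by positivity)]
    intro s
    rw [Real.dist_eq, abs_sub_le_iff]
    have hb : ∀ s, v s - u s ≤ dist v u := fun s => by
      calc v s - u s ≤ |v s - u s| := le_abs_self _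
        _ = dist (v s) (u s) := (Real.dist_eq _ _).symm
        _ ≤ dist v u := dist_le_pi_dist v u s
    have hb' : ∀ s, u s - v s ≤ dist v u := fun s => by
      calc u s - v s ≤ |u s - v s| := le_abs_self _
        _ = dist (u s) (v s) := (Real.dist_eq _ _).symm
        _ = dist (v s) (u s) := dist_comm _ _
        _ ≤ dist v u := dist_le_pi_dist v u s
    constructor
    · exact Tpol_diff_le hτ0 hτ1 hγ0 hb s
    · exact Tpol_diff_le hτ0 hτ1 hγ0 hb' s

include hτ0 hτ1 hγ0 hγ1 in
set_option linter.unusedSectionVars false in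
theorem contracting_Topt (w : S → A → ℝ) :
    ContractingWith ⟨γ, hγ0⟩ (Topt τ γ w) := by
  constructor
  · exact_mod_cast hγ1
  · refine LipschitzWith.of_dist_le_mul fun v u => ?_
    rw [dist_pi_le_iff (by positivity)]
    intro s
    rw [Real.dist_eq, abs_sub_le_iff]
    have hb : ∀ s, v s - u s ≤ dist v u := fun s => by
      calc v s - u s ≤ |v s - u s| := le_abs_self _
        _ = dist (v s) (u s) := (Real.dist_eq _ _).symm
        _ ≤ dist v u := dist_le_pi_dist v u s
    have hb' : ∀ s, u s - v s ≤ dist v u := fun s => by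
      calc u s - v s ≤ |u s - v s| := le_abs_self _
        _ = dist (u s) (v s) := (Real.dist_eq _ _).symm
        _ = dist (v s) (u s) := dist_comm _ _
        _ ≤ dist v u := dist_le_pi_dist v u s
    constructor
    · exact Topt_diff_le hτ0 hτ1 hγ0 hb s
    · exact Topt_diff_le hτ0 hτ1 hγ0 hb' s

/-- value function of a deterministic policy. -/
def Vpol (w : S → A → ℝ) (π : S → A) : S → ℝ :=
  ContractingWith.fixedPoint (Tpol τ γ w π) (contracting_Tpol hτ0 hτ1 hγ0 hγ1 w π)

/-- optimal value function. -/
def Vopt (w : S → A → ℝ) : S → ℝ :=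
  ContractingWith.fixedPoint (Topt τ γ w) (contracting_Topt hτ0 hτ1 hγ0 hγ1 w)

theorem Vpol_fix (w : S → A → ℝ) (π : S → A) :
    Tpol τ γ w π (Vpol hτ0 hτ1 hγ0 hγ1 w π) = Vpol hτ0 hτ1 hγ0 hγ1 w π :=
  ContractingWith.fixedPoint_isFixedPt _

theorem Vopt_fix (w : S → A → ℝ) :
    Topt τ γ w (Vopt hτ0 hτ1 hγ0 hγ1 w) = Vopt hτ0 hτ1 hγ0 hγ1 w :=
  ContractingWith.fixedPoint_isFixedPt _

theorem Vpol_unique {w : S → A → ℝ} {π : S → A} {v : S → ℝ}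
    (hv : Tpol τ γ w π v = v) : v = Vpol hτ0 hτ1 hγ0 hγ1 w π :=
  ContractingWith.fixedPoint_unique _ hv

theorem Vopt_unique {w : S → A → ℝ} {v : S → ℝ}
    (hv : Topt τ γ w v = v) : v = Vopt hτ0 hτ1 hγ0 hγ1 w :=
  ContractingWith.fixedPoint_unique _ hv


set_option linter.unusedSectionVars false in
include hτ0 hτ1 hγ0 hγ1 in
/-- comparison principle for the optimality operator -/
theorem le_of_sub_super_opt {w : S → A → ℝ} {v u : S → ℝ}
    (hv : ∀ s, v s ≤ Topt τ γ w v s) (hu : ∀ s, Topt τ γ w u s ≤ u s) :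
    ∀ s, v s ≤ u s := by
  by_contra hcon
  push_neg at hcon
  obtain ⟨s1, hs1⟩ := hcon
  obtain ⟨sb, _, hsb⟩ := Finset.exists_max_image univ (fun s => v s - u s) ⟨s1, mem_univ s1⟩
  have hm : 0 < v sb - u sb := lt_of_lt_of_le (by linarith) (hsb s1 (mem_univ s1))
  have h1 : Topt τ γ w v sb - Topt τ γ w u sb ≤ γ * (v sb - u sb) :=
    Topt_diff_le hτ0 hτ1 hγ0 (fun s => hsb s (mem_univ s)) sb
  have h2 := hv sb
  have h3 := hu sb
  nlinarith [hm, h1]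

set_option linter.unusedSectionVars false in
include hτ0 hτ1 hγ0 hγ1 in
/-- comparison principle for the policy operator -/
theorem le_of_sub_super_pol {w : S → A → ℝ} {π : S → A} {v u : S → ℝ}
    (hv : ∀ s, v s ≤ Tpol τ γ w π v s) (hu : ∀ s, Tpol τ γ w π u s ≤ u s) :
    ∀ s, v s ≤ u s := by
  by_contra hcon
  push_neg at hcon
  obtain ⟨s1, hs1⟩ := hcon
  obtain ⟨sb, _, hsb⟩ := Finset.exists_max_image univ (fun s => v s - u s) ⟨s1, mem_univ s1⟩
  have hm : 0 < v sb - u sb := lt_of_lt_of_le (by linarith) (hsb s1 (mem_univ s1))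
  have h1 : Tpol τ γ w π v sb - Tpol τ γ w π u sb ≤ γ * (v sb - u sb) :=
    Tpol_diff_le hτ0 hτ1 hγ0 (fun s => hsb s (mem_univ s)) sb
  have h2 := hv sb
  have h3 := hu sb
  nlinarith [hm, h1]

theorem Vpol_nonneg {w : S → A → ℝ} {π : S → A} (hw : ∀ s, 0 ≤ w s (π s)) :
    ∀ s, 0 ≤ Vpol hτ0 hτ1 hγ0 hγ1 w π s := by
  refine le_of_sub_super_pol hτ0 hτ1 hγ0 hγ1 (w := w) (π := π) (v := fun _ => 0)
    (u := Vpol hτ0 hτ1 hγ0 hγ1 w π) ?_ ?_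
  · intro s
    have h0 : ∑ s', τ s (π s) s' * (0:ℝ) = 0 := by simp
    simp only [Tpol, h0]
    nlinarith [hw s]
  · intro s
    rw [Vpol_fix hτ0 hτ1 hγ0 hγ1 w π]

theorem Vpol_le_Vopt (w : S → A → ℝ) (π : S → A) :
    ∀ s, Vpol hτ0 hτ1 hγ0 hγ1 w π s ≤ Vopt hτ0 hτ1 hγ0 hγ1 w s := by
  refine le_of_sub_super_opt hτ0 hτ1 hγ0 hγ1 (w := w) ?_ ?_
  · intro s
    conv_lhs => rw [← Vpol_fix hτ0 hτ1 hγ0 hγ1 w π]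
    exact Finset.le_sup' (fun a => w s a + γ * ∑ s', τ s a s' *
      Vpol hτ0 hτ1 hγ0 hγ1 w π s') (mem_univ (π s))
  · intro s
    rw [Vopt_fix hτ0 hτ1 hγ0 hγ1 w]

theorem exists_greedy (w : S → A → ℝ) :
    ∃ π : S → A, Vpol hτ0 hτ1 hγ0 hγ1 w π = Vopt hτ0 hτ1 hγ0 hγ1 w := by
  have h : ∀ s, ∃ a, univ.sup' univ_nonempty
      (fun a => w s a + γ * ∑ s', τ s a s' * Vopt hτ0 hτ1 hγ0 hγ1 w s') =
      w s a + γ * ∑ s', τ s a s' * Vopt hτ0 hτ1 hγ0 hγ1 w s' := by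
    intro s
    obtain ⟨a, _, ha⟩ := Finset.exists_mem_eq_sup' (univ_nonempty (α := A))
      (fun a => w s a + γ * ∑ s', τ s a s' * Vopt hτ0 hτ1 hγ0 hγ1 w s')
    exact ⟨a, ha⟩
  choose π hπ using h
  refine ⟨π, ?_⟩
  refine (Vpol_unique hτ0 hτ1 hγ0 hγ1 ?_).symm
  funext s
  have := Vopt_fix hτ0 hτ1 hγ0 hγ1 w
  calc Tpol τ γ w π (Vopt hτ0 hτ1 hγ0 hγ1 w) s
      = w s (π s) + γ * ∑ s', τ s (π s) s' * Vopt hτ0 hτ1 hγ0 hγ1 w s' := rfl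
    _ = univ.sup' univ_nonempty
        (fun a => w s a + γ * ∑ s', τ s a s' * Vopt hτ0 hτ1 hγ0 hγ1 w s') := (hπ s).symm
    _ = Topt τ γ w (Vopt hτ0 hτ1 hγ0 hγ1 w) s := rfl
    _ = Vopt hτ0 hτ1 hγ0 hγ1 w s := by rw [this]

set_option linter.unusedSectionVars false in
theorem Vpol_congr {w w' : S → A → ℝ} {π : S → A}
    (hw : ∀ s, w s (π s) = w' s (π s)) :
    Vpol hτ0 hτ1 hγ0 hγ1 w π = Vpol hτ0 hτ1 hγ0 hγ1 w' π := by
  refine Vpol_unique hτ0 hτ1 hγ0 hγ1 ?_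
  funext s
  show w' s (π s) + γ * ∑ s', τ s (π s) s' * Vpol hτ0 hτ1 hγ0 hγ1 w π s' = _
  rw [← hw s]
  exact congrFun (Vpol_fix hτ0 hτ1 hγ0 hγ1 w π) s


theorem sup'_eq_ciSup (f : A → ℝ) : univ.sup' univ_nonempty f = ⨆ a, f a :=
  le_antisymm
    (Finset.sup'_le _ _ fun a _ => le_ciSup (Set.Finite.bddAbove (Set.finite_range f)) a)
    (ciSup_le fun a => Finset.le_sup' f (mem_univ a))

section Occ

variable [DecidableEq S] [DecidableEq A]

/-- value of policy `π` for the reward `1_{state = s}`. -/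
def Vdelta (π : S → A) (s : S) : S → ℝ :=
  Vpol hτ0 hτ1 hγ0 hγ1 (fun t (_ : A) => if t = s then (1:ℝ) else 0) π

set_option linter.unusedSectionVars false in
theorem Vdelta_fix (π : S → A) (s : S) (s0 : S) :
    Vdelta hτ0 hτ1 hγ0 hγ1 π s s0 = (if s0 = s then (1:ℝ) else 0) +
      γ * ∑ s', τ s0 (π s0) s' * Vdelta hτ0 hτ1 hγ0 hγ1 π s s' :=
  (congrFun (Vpol_fix hτ0 hτ1 hγ0 hγ1 (fun t (_ : A) => if t = s then (1:ℝ) else 0) π) s0).symm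

set_option linter.unusedSectionVars false in
theorem Vdelta_nonneg (π : S → A) (s : S) (s0 : S) :
    0 ≤ Vdelta hτ0 hτ1 hγ0 hγ1 π s s0 :=
  Vpol_nonneg hτ0 hτ1 hγ0 hγ1 (fun t => by positivity) s0

set_option linter.unusedSectionVars false in
theorem Vpol_lift_decomp (h : S → ℝ) (π : S → A) :
    Vpol hτ0 hτ1 hγ0 hγ1 (fun t (_ : A) => h t) π
      = fun s0 => ∑ s, h s * Vdelta hτ0 hτ1 hγ0 hγ1 π s s0 := by
  refine (Vpol_unique hτ0 hτ1 hγ0 hγ1 ?_).symm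
  funext s0
  show h s0 + γ * ∑ s', τ s0 (π s0) s' *
      (∑ s, h s * Vdelta hτ0 hτ1 hγ0 hγ1 π s s') = _
  have h1 : ∑ s', τ s0 (π s0) s' * (∑ s, h s * Vdelta hτ0 hτ1 hγ0 hγ1 π s s')
      = ∑ s', ∑ s, h s * (τ s0 (π s0) s' * Vdelta hτ0 hτ1 hγ0 hγ1 π s s') := by
    refine Finset.sum_congr rfl fun s' _ => ?_
    rw [Finset.mul_sum]
    exact Finset.sum_congr rfl fun s _ => by ring
  rw [h1, Finset.sum_comm]
  have h2 : ∀ s, h s * Vdelta hτ0 hτ1 hγ0 hγ1 π s s0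
      = h s * (if s0 = s then (1:ℝ) else 0)
        + γ * ∑ s', h s * (τ s0 (π s0) s' * Vdelta hτ0 hτ1 hγ0 hγ1 π s s') := by
    intro s
    have e1 : h s * ∑ s', τ s0 (π s0) s' * Vdelta hτ0 hτ1 hγ0 hγ1 π s s'
        = ∑ s', h s * (τ s0 (π s0) s' * Vdelta hτ0 hτ1 hγ0 hγ1 π s s') :=
      Finset.mul_sum _ _ _
    rw [Vdelta_fix hτ0 hτ1 hγ0 hγ1 π s s0, mul_add,
      show h s * (γ * ∑ s', τ s0 (π s0) s' * Vdelta hτ0 hτ1 hγ0 hγ1 π s s')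
        = γ * (h s * ∑ s', τ s0 (π s0) s' * Vdelta hτ0 hτ1 hγ0 hγ1 π s s') from by ring,
      e1]
  rw [Finset.sum_congr rfl fun s _ => h2 s, Finset.sum_add_distrib, ← Finset.mul_sum]
  have h3 : ∑ s, h s * (if s0 = s then (1:ℝ) else 0) = h s0 := by simp [mul_ite]
  rw [h3]

variable (ι : S → ℝ)

/-- discounted state-visitation density of policy `π`. -/
def dOcc (π : S → A) : S → ℝ :=
  fun s => (1 - γ) * ∑ s0, ι s0 * Vdelta hτ0 hτ1 hγ0 hγ1 π s s0

/-- discounted state-action occupancy measure of policy `π`. -/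
def pOcc (π : S → A) : S → A → ℝ :=
  fun s a => if a = π s then dOcc hτ0 hτ1 hγ0 hγ1 ι π s else 0

set_option linter.unusedSectionVars false in
theorem pOcc_sum (π : S → A) (s : S) :
    ∑ a, pOcc hτ0 hτ1 hγ0 hγ1 ι π s a = dOcc hτ0 hτ1 hγ0 hγ1 ι π s := by
  simp [pOcc, Finset.sum_ite_eq']

set_option linter.unusedSectionVars false in
theorem dOcc_nonneg (hι : ∀ s, 0 ≤ ι s) (π : S → A) (s : S) :
    0 ≤ dOcc hτ0 hτ1 hγ0 hγ1 ι π s := by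
  refine mul_nonneg (by linarith) (Finset.sum_nonneg fun s0 _ =>
    mul_nonneg (hι s0) (Vdelta_nonneg hτ0 hτ1 hγ0 hγ1 π s s0))

set_option linter.unusedSectionVars false in
theorem dOcc_eval (π : S → A) (g : S → ℝ) :
    ∑ s, dOcc hτ0 hτ1 hγ0 hγ1 ι π s * g s
      = (1 - γ) * ∑ s0, ι s0 * Vpol hτ0 hτ1 hγ0 hγ1 (fun t (_ : A) => g t) π s0 := by
  rw [Vpol_lift_decomp hτ0 hτ1 hγ0 hγ1 g π]
  have h1 : ∀ s, dOcc hτ0 hτ1 hγ0 hγ1 ι π s * g s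
      = (1 - γ) * ∑ s0, ι s0 * (g s * Vdelta hτ0 hτ1 hγ0 hγ1 π s s0) := by
    intro s
    show ((1 - γ) * ∑ s0, ι s0 * Vdelta hτ0 hτ1 hγ0 hγ1 π s s0) * g s = _
    rw [mul_assoc]
    congr 1
    rw [Finset.sum_mul]
    exact Finset.sum_congr rfl fun s0 _ => by ring
  rw [Finset.sum_congr rfl fun s _ => h1 s, ← Finset.mul_sum, Finset.sum_comm]
  congr 1
  exact Finset.sum_congr rfl fun s0 _ => (Finset.mul_sum _ _ _).symm

set_option linter.unusedSectionVars false in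
theorem Vdelta_shift (π : S → A) (s : S) :
    Vdelta hτ0 hτ1 hγ0 hγ1 π s = fun s0 => (if s0 = s then (1:ℝ) else 0) +
      γ * Vpol hτ0 hτ1 hγ0 hγ1 (fun t (_ : A) => τ t (π t) s) π s0 := by
  refine ((Vpol_unique hτ0 hτ1 hγ0 hγ1 ?_).symm :
    Vpol hτ0 hτ1 hγ0 hγ1 (fun t (_ : A) => if t = s then (1:ℝ) else 0) π = _)
  set Vg := Vpol hτ0 hτ1 hγ0 hγ1 (fun t (_ : A) => τ t (π t) s) π with hVg
  have hfix : ∀ s0, Vg s0 = τ s0 (π s0) s + γ * ∑ s', τ s0 (π s0) s' * Vg s' :=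
    fun s0 => (congrFun (Vpol_fix hτ0 hτ1 hγ0 hγ1 _ π) s0).symm
  funext s0
  show (if s0 = s then (1:ℝ) else 0) + γ * ∑ s', τ s0 (π s0) s' *
      ((if s' = s then (1:ℝ) else 0) + γ * Vg s') = _
  have h1 : ∑ s', τ s0 (π s0) s' * ((if s' = s then (1:ℝ) else 0) + γ * Vg s')
      = τ s0 (π s0) s + γ * ∑ s', τ s0 (π s0) s' * Vg s' := by
    rw [show (∑ s', τ s0 (π s0) s' * ((if s' = s then (1:ℝ) else 0) + γ * Vg s'))
        = ∑ s', (τ s0 (π s0) s' * (if s' = s then (1:ℝ) else 0)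
          + γ * (τ s0 (π s0) s' * Vg s')) from
      Finset.sum_congr rfl fun s' _ => by ring]
    rw [Finset.sum_add_distrib, ← Finset.mul_sum]
    congr 1
    simp [mul_ite]
  rw [h1, ← hfix s0]

set_option linter.unusedSectionVars false in
theorem dOcc_flow (π : S → A) (s : S) :
    dOcc hτ0 hτ1 hγ0 hγ1 ι π s = (1 - γ) * ι s +
      γ * ∑ s', ∑ a', pOcc hτ0 hτ1 hγ0 hγ1 ι π s' a' * τ s' a' s := by
  have hinner : ∀ s', ∑ a', pOcc hτ0 hτ1 hγ0 hγ1 ι π s' a' * τ s' a' s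
      = dOcc hτ0 hτ1 hγ0 hγ1 ι π s' * τ s' (π s') s := by
    intro s'
    simp [pOcc, ite_mul, Finset.sum_ite_eq']
  rw [Finset.sum_congr rfl fun s' _ => hinner s',
    dOcc_eval hτ0 hτ1 hγ0 hγ1 ι π (fun s' => τ s' (π s') s)]
  show (1 - γ) * ∑ s0, ι s0 * Vdelta hτ0 hτ1 hγ0 hγ1 π s s0 = _
  rw [show (∑ s0, ι s0 * Vdelta hτ0 hτ1 hγ0 hγ1 π s s0)
      = ∑ s0, (ι s0 * (if s0 = s then (1:ℝ) else 0)
        + γ * (ι s0 * Vpol hτ0 hτ1 hγ0 hγ1 (fun t (_ : A) => τ t (π t) s) π s0)) from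
    Finset.sum_congr rfl fun s0 _ => by rw [congrFun (Vdelta_shift hτ0 hτ1 hγ0 hγ1 π s) s0]; ring]
  rw [Finset.sum_add_distrib, ← Finset.mul_sum]
  have : ∑ s0, ι s0 * (if s0 = s then (1:ℝ) else 0) = ι s := by simp [mul_ite]
  rw [this]
  ring

set_option linter.unusedSectionVars false in
theorem pOcc_obj (π : S → A) (w : S → A → ℝ) :
    ∑ s, ∑ a, pOcc hτ0 hτ1 hγ0 hγ1 ι π s a * w s a
      = (1 - γ) * ∑ s0, ι s0 * Vpol hτ0 hτ1 hγ0 hγ1 w π s0 := by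
  have hinner : ∀ s, ∑ a, pOcc hτ0 hτ1 hγ0 hγ1 ι π s a * w s a
      = dOcc hτ0 hτ1 hγ0 hγ1 ι π s * w s (π s) := by
    intro s
    simp [pOcc, ite_mul, Finset.sum_ite_eq']
  rw [Finset.sum_congr rfl fun s _ => hinner s,
    dOcc_eval hτ0 hτ1 hγ0 hγ1 ι π (fun s => w s (π s)),
    Vpol_congr hτ0 hτ1 hγ0 hγ1 (w := fun t (_ : A) => w t (π t)) (w' := w) (π := π)
      (fun s => rfl)]

end Occ

end

/-- Abstract KKT-type lemma: if for every direction `h` that is nonnegative on the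
"active constraint" coordinates `Z` some `u π` has nonnegative pairing with `h`, then
some convex combination of the `u π` lies in the dual cone
`{g | g ≥ 0 on Z, g = 0 off Z}`. -/
theorem exists_kkt_weights {I P : Type*} [Fintype I] [Fintype P] [Nonempty P]
    (u : P → I → ℝ) (Z : I → Prop)
    (hdir : ∀ h : I → ℝ, (∀ i, Z i → 0 ≤ h i) → ∃ π, 0 ≤ ∑ i, u π i * h i) :
    ∃ lam : P → ℝ, (∀ π, 0 ≤ lam π) ∧ (∑ π, lam π = 1) ∧
      (∀ i, Z i → 0 ≤ ∑ π, lam π * u π i) ∧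
      (∀ i, ¬ Z i → ∑ π, lam π * u π i = 0) := by
  classical
  set Cstar : Set (I → ℝ) := {g | ∀ i, (Z i → 0 ≤ g i) ∧ (¬ Z i → g i = 0)} with hCstar
  set U : Set (I → ℝ) := convexHull ℝ (Set.range u) with hU
  -- U and Cstar intersect
  have hninter : ∃ x, x ∈ U ∧ x ∈ Cstar := by
    by_contra hcon
    push_neg at hcon
    have hdisj : Disjoint U Cstar := by
      rw [Set.disjoint_left]
      intro x hxU hxC
      exact hcon x hxU hxC
    obtain ⟨f, α, β, hfU, hαβ, hfC⟩ :=
      geometric_hahn_banach_compact_closed (convex_convexHull ℝ _)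
        ((Set.finite_range u).isCompact_convexHull ℝ)
        (by
          intro x hx y hy a b ha hb hab
          intro i
          constructor
          · intro hz
            have hx' := (hx i).1 hz
            have hy' := (hy i).1 hz
            have : (a • x + b • y) i = a * x i + b * y i := by simp
            rw [this]
            positivity
          · intro hz
            have hx' := (hx i).2 hz
            have hy' := (hy i).2 hz
            have : (a • x + b • y) i = a * x i + b * y i := by simp
            rw [this, hx', hy']
            ring)
        (by
          have : Cstar = ⋂ i, {g : I → ℝ | (Z i → 0 ≤ g i) ∧ (¬ Z i → g i = 0)} := by
            ext g; simp [hCstar, Set.mem_iInter]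
          rw [this]
          refine isClosed_iInter fun i => ?_
          by_cases hz : Z i
          · have : {g : I → ℝ | (Z i → 0 ≤ g i) ∧ (¬ Z i → g i = 0)}
                = {g : I → ℝ | 0 ≤ g i} := by ext g; simp [hz]
            rw [this]
            exact isClosed_le continuous_const (continuous_apply i)
          · have : {g : I → ℝ | (Z i → 0 ≤ g i) ∧ (¬ Z i → g i = 0)}
                = {g : I → ℝ | g i = 0} := by ext g; simp [hz]
            rw [this]
            exact isClosed_eq (continuous_apply i) continuous_const)
        hdisj
    -- β < 0 since 0 ∈ Cstar
    have h0C : (0 : I → ℝ) ∈ Cstar := by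
      intro i; constructor <;> intro _ <;> simp
    have hβ : β < 0 := by simpa using hfC 0 h0C
    -- linear functional as a vector
    set h : I → ℝ := fun i => f (Pi.single i (1:ℝ) : I → ℝ) with hh
    have hrep : ∀ x : I → ℝ, f x = ∑ i, x i * h i := by
      intro x
      have hx : x = ∑ i, Pi.single i (x i) := by
        rw [Finset.univ_sum_single]
      conv_lhs => rw [hx]
      rw [map_sum]
      refine Finset.sum_congr rfl fun i _ => ?_
      have hsingle : Pi.single i (x i) = x i • (Pi.single i (1:ℝ) : I → ℝ) := by
        funext j
        by_cases hji : j = i <;>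
          simp [Pi.single_apply, hji, Pi.smul_apply, smul_eq_mul]
      rw [hsingle, map_smul, smul_eq_mul, hh]
    -- h is nonnegative on Z
    have hhZ : ∀ i, Z i → 0 ≤ h i := by
      intro i hz
      by_contra hneg
      push_neg at hneg
      set t : ℝ := β / h i with ht
      have htpos : 0 < t := div_pos_of_neg_of_neg hβ hneg
      have hmem : t • (Pi.single i (1:ℝ) : I → ℝ) ∈ Cstar := by
        intro j
        constructor
        · intro _
          by_cases hji : j = i <;>
            simp [Pi.single_apply, hji, Pi.smul_apply, smul_eq_mul] <;> positivity
        · intro hnz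
          have hji : j ≠ i := by rintro rfl; exact hnz hz
          simp [Pi.single_apply, hji, Pi.smul_apply, smul_eq_mul]
      have hc := hfC _ hmem
      rw [map_smul, smul_eq_mul] at hc
      have hc' : β < t * h i := hc
      have heq : t * h i = β := by
        rw [ht]
        exact div_mul_cancel₀ β (ne_of_lt hneg)
      rw [heq] at hc'
      exact lt_irrefl _ hc'
    obtain ⟨π, hπ⟩ := hdir h hhZ
    have hmemU : u π ∈ U := subset_convexHull ℝ _ (Set.mem_range_self π)
    have h1 : f (u π) < α := hfU _ hmemU
    rw [hrep] at h1
    linarith [hπ, h1, hαβ, hβ]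
  obtain ⟨x, hxU, hxC⟩ := hninter
  -- represent x as a convex combination
  rw [hU, show Set.range u = ↑(Finset.image u Finset.univ) by simp,
    Finset.convexHull_eq] at hxU
  obtain ⟨w, hw0, hw1, hwx⟩ := hxU
  -- choice of a policy for each point in the image
  have hσ : ∀ y ∈ Finset.image u Finset.univ, ∃ π : P, u π = y := by
    intro y hy
    obtain ⟨π, _, hπ⟩ := Finset.mem_image.mp hy
    exact ⟨π, hπ⟩
  set σ : (I → ℝ) → P := fun y =>
    if hy : ∃ π : P, u π = y then hy.choose else Classical.arbitrary P with hσdef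
  have hσspec : ∀ y ∈ Finset.image u Finset.univ, u (σ y) = y := by
    intro y hy
    have hex : ∃ π : P, u π = y := hσ y hy
    show u (if hy' : ∃ π : P, u π = y then hy'.choose else Classical.arbitrary P) = y
    rw [dif_pos hex]
    exact hex.choose_spec
  have hxi : ∀ i, (∑ π : P,
      (∑ y ∈ Finset.image u Finset.univ, if σ y = π then w y else 0) * u π i) = x i := by
    intro i
    have hx1 : x i = ∑ y ∈ Finset.image u Finset.univ, w y * y i := by
      rw [← hwx, Finset.centerMass, hw1, inv_one, one_smul, Finset.sum_apply]
      exact Finset.sum_congr rfl fun y _ => by simp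
    calc ∑ π : P, (∑ y ∈ Finset.image u Finset.univ, if σ y = π then w y else 0) * u π i
        = ∑ π : P, ∑ y ∈ Finset.image u Finset.univ,
            (if σ y = π then w y else 0) * u π i := by
          exact Finset.sum_congr rfl fun π _ => Finset.sum_mul ..
      _ = ∑ y ∈ Finset.image u Finset.univ, ∑ π : P,
            (if σ y = π then w y else 0) * u π i := Finset.sum_comm
      _ = ∑ y ∈ Finset.image u Finset.univ, w y * u (σ y) i := by
          refine Finset.sum_congr rfl fun y hy => ?_
          rw [Finset.sum_congr rfl fun π (_ : π ∈ Finset.univ) =>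
            (ite_mul _ _ _ (u π i) : (if σ y = π then w y else 0) * u π i = _)]
          simp [Finset.sum_ite_eq]
      _ = ∑ y ∈ Finset.image u Finset.univ, w y * y i := by
          refine Finset.sum_congr rfl fun y hy => by rw [hσspec y hy]
      _ = x i := hx1.symm
  refine ⟨fun π => ∑ y ∈ Finset.image u Finset.univ, if σ y = π then w y else 0,
    ?_, ?_, ?_, ?_⟩
  · intro π
    refine Finset.sum_nonneg fun y hy => ?_
    by_cases hyπ : σ y = π <;> simp [hyπ, hw0 y hy]
  · rw [Finset.sum_comm, ← hw1]
    refine Finset.sum_congr rfl fun y hy => ?_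
    simp [Finset.sum_ite_eq']
  · intro i hi
    rw [hxi i]
    exact (hxC i).1 hi
  · intro i hi
    rw [hxi i]
    exact (hxC i).2 hi

end ATCAux

/-- given optimal solutions of the (feasible) transition-constrained dual
and primal LPs: (i) `v*`, `q*` satisfy the Bellman optimality equations for the modified
reward `r*_ATC = r − r_c*·c` (so they are the optimal value functions for `r*_ATC`);
(ii) the derived policy `π* = p*/d*` is greedy w.r.t. `q*`; and (iii) `r_c*(s,a) = 0`
whenever `p*(s,a) > 0` and `c̄(s,a) < 0`. -/
theorem atc_primal_dual_optimality
    {S A : Type*} [Fintype S] [Fintype A] [Nonempty S] [Nonempty A]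
    (ι : S → ℝ) (τ : S → A → S → ℝ) (γ : ℝ) (r : S → A → S → ℝ)
    (hMDP : IsMDP ι τ γ)
    (c : S → A → S → ℝ)
    (dStar : S → ℝ) (pStar : S → A → ℝ)
    (hDFeas : DualFeas ι τ γ dStar pStar ∧
      ∀ s a, pStar s a * (∑ s', τ s a s' * c s a s') ≤ 0)
    (hDOpt : ∀ (d : S → ℝ) (p : S → A → ℝ),
      (DualFeas ι τ γ d p ∧
        ∀ s a, p s a * (∑ s', τ s a s' * c s a s') ≤ 0) →
      DualObj τ r p ≤ DualObj τ r pStar)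
    (vStar : S → ℝ) (qStar rcStar : S → A → ℝ)
    (hPFeas : (∀ s a, qStar s a ≤ vStar s) ∧
      (∀ s a, qStar s a = ∑ s', τ s a s' *
        (r s a s' - rcStar s a * c s a s' + γ * vStar s')) ∧
      ∀ s a, 0 ≤ rcStar s a)
    (hPOpt : ∀ (v : S → ℝ) (q rc : S → A → ℝ),
      ((∀ s a, q s a ≤ v s) ∧
        (∀ s a, q s a = ∑ s', τ s a s' *
          (r s a s' - rc s a * c s a s' + γ * v s')) ∧
        ∀ s a, 0 ≤ rc s a) →
      ∑ s, ι s * ((1 - γ) * vStar s) ≤ ∑ s, ι s * ((1 - γ) * v s)) :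
    (∀ s, vStar s = ⨆ a, ∑ s', τ s a s' *
      (r s a s' - rcStar s a * c s a s' + γ * vStar s')) ∧
    (∀ s a, qStar s a = ∑ s', τ s a s' *
      (r s a s' - rcStar s a * c s a s' + γ * vStar s')) ∧
    (∀ v : S → ℝ,
      (∀ s, v s = ⨆ a, ∑ s', τ s a s' *
        (r s a s' - rcStar s a * c s a s' + γ * v s')) → v = vStar) ∧
    (∀ s a, 0 < pStar s a / dStar s → ∀ a', qStar s a' ≤ qStar s a) ∧
    (∀ s a, 0 < pStar s a → (∑ s', τ s a s' * c s a s') < 0 → rcStar s a = 0) := by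
  classical
  obtain ⟨hι, hι1, hτ0, hτ1, hγ0, hγ1⟩ := hMDP
  obtain ⟨⟨hDp_sum, hDp_flow, hDp_nonneg⟩, hDtc⟩ := hDFeas
  obtain ⟨hq_le, hq_eq, hrc0⟩ := hPFeas
  have hγ1' : (0:ℝ) < 1 - γ := by linarith
  -- abbreviations
  set rbar : S → A → ℝ := fun s a => ∑ s', τ s a s' * r s a s' with hrbar
  set cbar : S → A → ℝ := fun s a => ∑ s', τ s a s' * c s a s' with hcbar
  -- expansion of the Q-value sum
  have hexp : ∀ (rc : S → A → ℝ) (v : S → ℝ) (s : S) (a : A),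
      (∑ s', τ s a s' * (r s a s' - rc s a * c s a s' + γ * v s'))
      = (rbar s a - rc s a * cbar s a) + γ * ∑ s', τ s a s' * v s' := by
    intro rc v s a
    calc ∑ s', τ s a s' * (r s a s' - rc s a * c s a s' + γ * v s')
        = ∑ s', (τ s a s' * r s a s' - rc s a * (τ s a s' * c s a s')
            + γ * (τ s a s' * v s')) :=
          Finset.sum_congr rfl fun s' _ => by ring
      _ = (rbar s a - rc s a * cbar s a) + γ * ∑ s', τ s a s' * v s' := by
          rw [Finset.sum_add_distrib, Finset.sum_sub_distrib, ← Finset.mul_sum,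
            ← Finset.mul_sum, hrbar, hcbar]
  set w0 : S → A → ℝ := fun s a => rbar s a - rcStar s a * cbar s a with hw0
  -- Step A : vStar is the optimal value function for the reward w0
  have hfix := ATCAux.Vopt_fix hτ0 hτ1 hγ0 hγ1 w0
  have hVle : ∀ s, ATCAux.Vopt hτ0 hτ1 hγ0 hγ1 w0 s ≤ vStar s := by
    refine ATCAux.le_of_sub_super_opt hτ0 hτ1 hγ0 hγ1 (w := w0) ?_ ?_
    · intro s; rw [hfix]
    · intro s
      refine Finset.sup'_le _ _ fun a _ => ?_
      have h1 := hq_le s a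
      rw [hq_eq s a, hexp rcStar vStar s a] at h1
      exact h1
  have hup := hPOpt (ATCAux.Vopt hτ0 hτ1 hγ0 hγ1 w0)
    (fun s a => ∑ s', τ s a s' *
      (r s a s' - rcStar s a * c s a s' + γ * ATCAux.Vopt hτ0 hτ1 hγ0 hγ1 w0 s'))
    rcStar
    ⟨by
      intro s a
      beta_reduce
      rw [hexp rcStar (ATCAux.Vopt hτ0 hτ1 hγ0 hγ1 w0) s a]
      conv_rhs => rw [← hfix]
      exact Finset.le_sup' (fun a => w0 s a + γ * ∑ s', τ s a s' *
        ATCAux.Vopt hτ0 hτ1 hγ0 hγ1 w0 s') (Finset.mem_univ a),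
      fun s a => rfl, hrc0⟩
  have hve : ∀ s, vStar s = ATCAux.Vopt hτ0 hτ1 hγ0 hγ1 w0 s := by
    have hterm : ∀ s ∈ Finset.univ, (0:ℝ) ≤ ι s * ((1 - γ) * vStar s)
        - ι s * ((1 - γ) * ATCAux.Vopt hτ0 hτ1 hγ0 hγ1 w0 s) := by
      intro s _
      have key : (0:ℝ) ≤ ι s * ((1 - γ) * (vStar s - ATCAux.Vopt hτ0 hτ1 hγ0 hγ1 w0 s)) :=
        mul_nonneg (hι s).le (mul_nonneg hγ1'.le (sub_nonneg.mpr (hVle s)))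
      have key2 : ι s * ((1 - γ) * vStar s)
          - ι s * ((1 - γ) * ATCAux.Vopt hτ0 hτ1 hγ0 hγ1 w0 s)
          = ι s * ((1 - γ) * (vStar s - ATCAux.Vopt hτ0 hτ1 hγ0 hγ1 w0 s)) := by ring
      linarith
    have hsum0 : ∑ s, (ι s * ((1 - γ) * vStar s)
        - ι s * ((1 - γ) * ATCAux.Vopt hτ0 hτ1 hγ0 hγ1 w0 s)) = 0 := by
      rw [Finset.sum_sub_distrib]
      have h2 : ∑ s, ι s * ((1 - γ) * vStar s)
          ≤ ∑ s, ι s * ((1 - γ) * ATCAux.Vopt hτ0 hτ1 hγ0 hγ1 w0 s) := hup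
      have h3 : ∑ s, ι s * ((1 - γ) * ATCAux.Vopt hτ0 hτ1 hγ0 hγ1 w0 s)
          ≤ ∑ s, ι s * ((1 - γ) * vStar s) := by
        refine Finset.sum_le_sum fun s _ => ?_
        exact mul_le_mul_of_nonneg_left
          (mul_le_mul_of_nonneg_left (hVle s) hγ1'.le) (hι s).le
      linarith
    have := (Finset.sum_eq_zero_iff_of_nonneg hterm).mp hsum0
    intro s
    have h4 := this s (Finset.mem_univ s)
    have h5 := hι s
    have h6 := hVle s
    by_contra hne
    have h7 : ATCAux.Vopt hτ0 hτ1 hγ0 hγ1 w0 s < vStar s := lt_of_le_of_ne h6 (Ne.symm hne)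
    have key : (0:ℝ) < ι s * ((1 - γ) * (vStar s - ATCAux.Vopt hτ0 hτ1 hγ0 hγ1 w0 s)) :=
      mul_pos h5 (mul_pos hγ1' (sub_pos.mpr h7))
    have key2 : ι s * ((1 - γ) * vStar s)
        - ι s * ((1 - γ) * ATCAux.Vopt hτ0 hτ1 hγ0 hγ1 w0 s)
        = ι s * ((1 - γ) * (vStar s - ATCAux.Vopt hτ0 hτ1 hγ0 hγ1 w0 s)) := by ring
    linarith
  have hvfun : ATCAux.Vopt hτ0 hτ1 hγ0 hγ1 w0 = vStar := funext fun s => (hve s).symm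
  have hTfix : ATCAux.Topt τ γ w0 vStar = vStar := by rw [← hvfun]; exact hfix
  -- Goal 1
  have goal1 : ∀ s, vStar s = ⨆ a, ∑ s', τ s a s' *
      (r s a s' - rcStar s a * c s a s' + γ * vStar s') := by
    intro s
    rw [← ATCAux.sup'_eq_ciSup]
    have h1 : (fun a => ∑ s', τ s a s' * (r s a s' - rcStar s a * c s a s' + γ * vStar s'))
        = fun a => w0 s a + γ * ∑ s', τ s a s' * vStar s' :=
      funext fun a => hexp rcStar vStar s a
    rw [h1]
    exact (congrFun hTfix s).symm
  -- Goal 3 (uniqueness)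
  have goal3 : ∀ v : S → ℝ,
      (∀ s, v s = ⨆ a, ∑ s', τ s a s' *
        (r s a s' - rcStar s a * c s a s' + γ * v s')) → v = vStar := by
    intro v hv
    have hv' : ATCAux.Topt τ γ w0 v = v := by
      funext s
      have h1 : (fun a => ∑ s', τ s a s' * (r s a s' - rcStar s a * c s a s' + γ * v s'))
          = fun a => w0 s a + γ * ∑ s', τ s a s' * v s' :=
        funext fun a => hexp rcStar v s a
      rw [show ATCAux.Topt τ γ w0 v s = Finset.univ.sup' Finset.univ_nonempty
        (fun a => w0 s a + γ * ∑ s', τ s a s' * v s') from rfl, ← h1,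
        ATCAux.sup'_eq_ciSup, ← hv s]
    funext s
    refine le_antisymm ?_ ?_
    · exact ATCAux.le_of_sub_super_opt hτ0 hτ1 hγ0 hγ1 (w := w0)
        (fun s => le_of_eq (congrFun hv' s).symm) (fun s => le_of_eq (congrFun hTfix s)) s
    · exact ATCAux.le_of_sub_super_opt hτ0 hτ1 hγ0 hγ1 (w := w0)
        (fun s => le_of_eq (congrFun hTfix s).symm) (fun s => le_of_eq (congrFun hv' s)) s
  have heq1γ : ∀ v : S → ℝ, ∑ s, ι s * ((1 - γ) * v s) = (1 - γ) * ∑ s, ι s * v s := by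
    intro v
    rw [Finset.mul_sum]
    exact Finset.sum_congr rfl fun s _ => by ring
  -- Step D : strong duality
  have hsd : ∑ s, ι s * ((1 - γ) * vStar s) ≤ DualObj τ r pStar := by
    set φs : ℝ := (1 - γ) * ∑ s, ι s * vStar s with hφs
    set L : (S → A) → ℝ :=
      fun π => (1 - γ) * ∑ s0, ι s0 * ATCAux.Vpol hτ0 hτ1 hγ0 hγ1 w0 π s0 with hLdef
    set ubig : (S → A) → (S × A) → ℝ := fun π i =>
      -(ATCAux.pOcc hτ0 hτ1 hγ0 hγ1 ι π i.1 i.2 * cbar i.1 i.2) with hubig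
    have hVpol_le : ∀ (π : S → A) (s : S),
        ATCAux.Vpol hτ0 hτ1 hγ0 hγ1 w0 π s ≤ vStar s := fun π s =>
      (ATCAux.Vpol_le_Vopt hτ0 hτ1 hγ0 hγ1 w0 π s).trans (le_of_eq (congrFun hvfun s))
    have hL_le : ∀ π, L π ≤ φs := by
      intro π
      rw [hLdef, hφs]
      refine mul_le_mul_of_nonneg_left (Finset.sum_le_sum fun s _ =>
        mul_le_mul_of_nonneg_left (hVpol_le π s) (hι s).le) hγ1'.le
    -- the objective of the occupancy measure of π under a perturbed reward
    have hobj : ∀ (π : S → A) (wa : S → A → ℝ),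
        ∑ s, ∑ a, ATCAux.pOcc hτ0 hτ1 hγ0 hγ1 ι π s a * wa s a
          = (1 - γ) * ∑ s0, ι s0 * ATCAux.Vpol hτ0 hτ1 hγ0 hγ1 wa π s0 :=
      fun π wa => ATCAux.pOcc_obj hτ0 hτ1 hγ0 hγ1 ι π wa
    have hgreedy0 : ∃ π, L π = φs := by
      obtain ⟨π, hπ⟩ := ATCAux.exists_greedy hτ0 hτ1 hγ0 hγ1 w0
      refine ⟨π, ?_⟩
      simp only [hLdef, hφs]
      rw [hπ, hvfun]
    haveI : Nonempty {π : S → A // L π = φs} :=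
      ⟨⟨hgreedy0.choose, hgreedy0.choose_spec⟩⟩
    set u : {π : S → A // L π = φs} → (S × A) → ℝ := fun π => ubig π.1 with hu
    -- the directional optimality condition
    have hdir : ∀ h : (S × A) → ℝ, (∀ i, rcStar i.1 i.2 = 0 → 0 ≤ h i) →
        ∃ π : {π : S → A // L π = φs}, 0 ≤ ∑ i, u π i * h i := by
      intro h hh
      set t1 : ℝ := Finset.univ.inf' Finset.univ_nonempty
        (fun i : S × A => if h i < 0 then rcStar i.1 i.2 / (-(h i)) else 1) with ht1
      have ht1pos : 0 < t1 := by
        rw [ht1, Finset.lt_inf'_iff]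
        intro i _
        by_cases hi : h i < 0
        · rw [if_pos hi]
          have hrcpos : 0 < rcStar i.1 i.2 := by
            rcases lt_or_eq_of_le (hrc0 i.1 i.2) with h' | h'
            · exact h'
            · exfalso
              have := hh i h'.symm
              linarith
          exact div_pos hrcpos (by linarith)
        · rw [if_neg hi]
          norm_num
      have hfeas : ∀ t : ℝ, 0 < t → t ≤ t1 → ∀ s a, 0 ≤ rcStar s a + t * h (s, a) := by
        intro t ht htle s a
        by_cases hi : h (s, a) < 0
        · have hle : t1 ≤ rcStar s a / (-(h (s, a))) := by
            have h2 : t1 ≤ (if h (s, a) < 0 then rcStar s a / (-(h (s, a))) else 1) :=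
              Finset.inf'_le
                (f := fun i : S × A => if h i < 0 then rcStar i.1 i.2 / (-(h i)) else 1)
                (Finset.mem_univ (s, a))
            rw [if_pos hi] at h2
            exact h2
          have h3 : t ≤ rcStar s a / (-(h (s, a))) := le_trans htle hle
          rw [le_div_iff₀ (by linarith : (0:ℝ) < -(h (s, a)))] at h3
          nlinarith
        · push_neg at hi
          nlinarith [mul_nonneg ht.le hi, hrc0 s a]
      -- for each step size, a greedy perturbed policy
      have hstep : ∀ n : ℕ, ∃ π : S → A,
          φs ≤ L π + (t1 / (n + 1)) * ∑ i, ubig π i * h i := by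
        intro n
        set t : ℝ := t1 / (n + 1) with htdef
        have htpos : 0 < t := by positivity
        have htle : t ≤ t1 := by
          rw [htdef]
          rw [div_le_iff₀ (by positivity : (0:ℝ) < (n:ℝ) + 1)]
          nlinarith [ht1pos, Nat.cast_nonneg (α := ℝ) n]
        set rcn : S → A → ℝ := fun s a => rcStar s a + t * h (s, a) with hrcn
        have hrcn0 : ∀ s a, 0 ≤ rcn s a := fun s a => hfeas t htpos htle s a
        set wn : S → A → ℝ := fun s a => rbar s a - rcn s a * cbar s a with hwn
        have hfixn := ATCAux.Vopt_fix hτ0 hτ1 hγ0 hγ1 wn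
        have hupn := hPOpt (ATCAux.Vopt hτ0 hτ1 hγ0 hγ1 wn)
          (fun s a => ∑ s', τ s a s' *
            (r s a s' - rcn s a * c s a s' + γ * ATCAux.Vopt hτ0 hτ1 hγ0 hγ1 wn s'))
          rcn
          ⟨by
            intro s a
            beta_reduce
            rw [hexp rcn (ATCAux.Vopt hτ0 hτ1 hγ0 hγ1 wn) s a]
            conv_rhs => rw [← hfixn]
            exact Finset.le_sup' (fun a => wn s a + γ * ∑ s', τ s a s' *
              ATCAux.Vopt hτ0 hτ1 hγ0 hγ1 wn s') (Finset.mem_univ a),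
            fun s a => rfl, hrcn0⟩
        obtain ⟨π, hπ⟩ := ATCAux.exists_greedy hτ0 hτ1 hγ0 hγ1 wn
        refine ⟨π, ?_⟩
        have h1 : φs ≤ (1 - γ) * ∑ s0, ι s0 * ATCAux.Vpol hτ0 hτ1 hγ0 hγ1 wn π s0 := by
          rw [hπ, hφs]
          rw [heq1γ vStar, heq1γ (ATCAux.Vopt hτ0 hτ1 hγ0 hγ1 wn)] at hupn
          exact hupn
        rw [← hobj π wn] at h1
        have h2 : ∑ s, ∑ a, ATCAux.pOcc hτ0 hτ1 hγ0 hγ1 ι π s a * wn s a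
            = (∑ s, ∑ a, ATCAux.pOcc hτ0 hτ1 hγ0 hγ1 ι π s a * w0 s a)
              + t * ∑ i : S × A, ubig π i * h i := by
          rw [show (∑ i : S × A, ubig π i * h i)
              = ∑ s, ∑ a, ubig π (s, a) * h (s, a) from by rw [Fintype.sum_prod_type]]
          rw [Finset.mul_sum, ← Finset.sum_add_distrib]
          refine Finset.sum_congr rfl fun s _ => ?_
          rw [Finset.mul_sum, ← Finset.sum_add_distrib]
          refine Finset.sum_congr rfl fun a _ => ?_
          rw [hwn, hubig, hrcn, hw0]
          ring
        rw [h2] at h1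
        have h3 : L π = ∑ s, ∑ a, ATCAux.pOcc hτ0 hτ1 hγ0 hγ1 ι π s a * w0 s a := by
          simp only [hLdef]
          rw [hobj π w0]
        rw [h3]
        exact h1
      choose f hf using hstep
      obtain ⟨π0, hfib⟩ := Finite.exists_infinite_fiber f
      have hfibinf : (f ⁻¹' {π0}).Infinite := Set.infinite_coe_iff.mp hfib
      set C : ℝ := ∑ i : S × A, ubig π0 i * h i with hC
      obtain ⟨n0, hn0mem⟩ := hfibinf.nonempty
      have hn0 : f n0 = π0 := hn0mem
      have hCnn : 0 ≤ C := by
        have h1 := hf n0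
        rw [hn0] at h1
        by_contra hneg
        push_neg at hneg
        have ht : (0:ℝ) < t1 / (n0 + 1) := by positivity
        have h2 : t1 / (n0 + 1) * C < 0 := mul_neg_of_pos_of_neg ht hneg
        have h3 := hL_le π0
        rw [← hC] at h1
        linarith
      have hLπ0 : L π0 = φs := by
        refine le_antisymm (hL_le π0) ?_
        refine le_of_forall_pos_le_add ?_
        intro ε hε
        obtain ⟨M, hM⟩ := exists_nat_gt (t1 * C / ε)
        obtain ⟨n, hnmem, hnM⟩ := hfibinf.exists_gt M
        have hn : f n = π0 := hnmem
        have h1 := hf n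
        rw [hn, ← hC] at h1
        have h2 : t1 / (n + 1) * C ≤ ε := by
          rw [div_mul_eq_mul_div, div_le_iff₀ (by positivity : (0:ℝ) < (n:ℝ) + 1)]
          have hMn : (M:ℝ) < (n:ℝ) + 1 := by
            have : (M:ℝ) ≤ (n:ℝ) := Nat.cast_le.mpr hnM.le
            linarith
          have h4 : t1 * C / ε < (n:ℝ) + 1 := lt_trans hM hMn
          rw [div_lt_iff₀ hε] at h4
          nlinarith
        linarith
      exact ⟨⟨π0, hLπ0⟩, hCnn⟩
    obtain ⟨lam, hlam0, hlam1, hlamZ, hlamNZ⟩ :=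
      ATCAux.exists_kkt_weights u (fun i : S × A => rcStar i.1 i.2 = 0) hdir
    set pHat : S → A → ℝ := fun s a =>
      ∑ π : {π : S → A // L π = φs}, lam π * ATCAux.pOcc hτ0 hτ1 hγ0 hγ1 ι π.1 s a
      with hpHat
    set dHat : S → ℝ := fun s =>
      ∑ π : {π : S → A // L π = φs}, lam π * ATCAux.dOcc hτ0 hτ1 hγ0 hγ1 ι π.1 s
      with hdHat
    -- exchange of summation helper
    have hexch : ∀ Y : S → A → ℝ,
        ∑ s, ∑ a, pHat s a * Y s a
          = ∑ π : {π : S → A // L π = φs}, lam π *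
              ∑ s, ∑ a, ATCAux.pOcc hτ0 hτ1 hγ0 hγ1 ι π.1 s a * Y s a := by
      intro Y
      rw [show (∑ s, ∑ a, pHat s a * Y s a)
          = ∑ s, ∑ a, ∑ π : {π : S → A // L π = φs},
              lam π * (ATCAux.pOcc hτ0 hτ1 hγ0 hγ1 ι π.1 s a * Y s a) from
        Finset.sum_congr rfl fun s _ => Finset.sum_congr rfl fun a _ => by
          rw [hpHat, Finset.sum_mul]
          exact Finset.sum_congr rfl fun π _ => by ring]
      rw [show (∑ s, ∑ a, ∑ π : {π : S → A // L π = φs},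
            lam π * (ATCAux.pOcc hτ0 hτ1 hγ0 hγ1 ι π.1 s a * Y s a))
          = ∑ s, ∑ π : {π : S → A // L π = φs}, ∑ a,
              lam π * (ATCAux.pOcc hτ0 hτ1 hγ0 hγ1 ι π.1 s a * Y s a) from
        Finset.sum_congr rfl fun s _ => Finset.sum_comm]
      rw [Finset.sum_comm]
      refine Finset.sum_congr rfl fun π _ => ?_
      rw [Finset.mul_sum]
      refine Finset.sum_congr rfl fun s _ => ?_
      rw [Finset.mul_sum]
    -- single-coordinate version
    have hcoord : ∀ s a, pHat s a * cbar s a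
        = ∑ π : {π : S → A // L π = φs},
            lam π * (ATCAux.pOcc hτ0 hτ1 hγ0 hγ1 ι π.1 s a * cbar s a) := by
      intro s a
      rw [hpHat, Finset.sum_mul]
      exact Finset.sum_congr rfl fun π _ => by ring
    have hcoordu : ∀ s a, (∑ π : {π : S → A // L π = φs}, lam π * u π (s, a))
        = -(pHat s a * cbar s a) := by
      intro s a
      rw [hcoord s a, ← Finset.sum_neg_distrib]
      exact Finset.sum_congr rfl fun π _ => by rw [hu, hubig]; ring
    -- dual feasibility of pHat
    have hfeasHat : DualFeas ι τ γ dHat pHat := by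
      refine ⟨?_, ?_, ?_⟩
      · intro s
        simp only [hdHat, hpHat]
        rw [Finset.sum_comm]
        refine Finset.sum_congr rfl fun π _ => ?_
        rw [← Finset.mul_sum, ATCAux.pOcc_sum hτ0 hτ1 hγ0 hγ1 ι π.1 s]
      · intro s
        have h1 : ∀ π : {π : S → A // L π = φs},
            lam π * ATCAux.dOcc hτ0 hτ1 hγ0 hγ1 ι π.1 s
              = lam π * ((1 - γ) * ι s) + γ * (lam π *
                ∑ s', ∑ a', ATCAux.pOcc hτ0 hτ1 hγ0 hγ1 ι π.1 s' a' * τ s' a' s) := by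
          intro π
          rw [ATCAux.dOcc_flow hτ0 hτ1 hγ0 hγ1 ι π.1 s]
          ring
        simp only [hdHat]
        rw [Finset.sum_congr rfl fun π _ => h1 π, Finset.sum_add_distrib,
          ← Finset.sum_mul, hlam1, ← Finset.mul_sum]
        rw [← hexch (fun s' a' => τ s' a' s)]
        ring
      · intro s a
        refine Finset.sum_nonneg fun π _ => mul_nonneg (hlam0 π) ?_
        rw [ATCAux.pOcc]
        by_cases hap : a = π.1 s
        · rw [if_pos hap]
          exact ATCAux.dOcc_nonneg hτ0 hτ1 hγ0 hγ1 ι (fun s => (hι s).le) π.1 s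
        · rw [if_neg hap]
    -- the transition constraint for pHat
    have htcHat : ∀ s a, pHat s a * cbar s a ≤ 0 := by
      intro s a
      by_cases hz : rcStar s a = 0
      · have := hlamZ (s, a) hz
        rw [hcoordu s a] at this
        linarith
      · have := hlamNZ (s, a) hz
        rw [hcoordu s a] at this
        linarith
    -- the objective of pHat is φs
    have hobjHat : DualObj τ r pHat = φs := by
      have hD0 : DualObj τ r pHat = ∑ s, ∑ a, pHat s a * rbar s a := rfl
      rw [hD0]
      have hsplit : ∀ s a, pHat s a * rbar s a
          = pHat s a * w0 s a + rcStar s a * (pHat s a * cbar s a) := by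
        intro s a
        rw [hw0]
        ring
      rw [Finset.sum_congr rfl fun s _ => Finset.sum_congr rfl fun a _ => hsplit s a]
      rw [Finset.sum_congr rfl fun s (_ : s ∈ Finset.univ) =>
        Finset.sum_add_distrib (s := Finset.univ), Finset.sum_add_distrib]
      have hz2 : (∑ s, ∑ a, rcStar s a * (pHat s a * cbar s a)) = 0 := by
        refine Finset.sum_eq_zero fun s _ => Finset.sum_eq_zero fun a _ => ?_
        by_cases hz : rcStar s a = 0
        · rw [hz, zero_mul]
        · have := hlamNZ (s, a) hz
          rw [hcoordu s a] at this
          have h2 : pHat s a * cbar s a = 0 := by linarith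
          rw [h2, mul_zero]
      rw [hz2, add_zero, hexch w0]
      have hLval : ∀ π : {π : S → A // L π = φs},
          (∑ s, ∑ a, ATCAux.pOcc hτ0 hτ1 hγ0 hγ1 ι π.1 s a * w0 s a) = φs := by
        intro π
        have hπ2 : L π.1 = φs := π.2
        simp only [hLdef] at hπ2
        rw [hobj π.1 w0]
        exact hπ2
      rw [Finset.sum_congr rfl fun π _ => by rw [hLval π]]
      rw [← Finset.sum_mul, hlam1, one_mul]
    have hfinal := hDOpt dHat pHat ⟨hfeasHat, htcHat⟩
    rw [hobjHat] at hfinal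
    rw [heq1γ vStar]
    exact hfinal
  -- Step E : complementary slackness
  have h1 : ∀ s a, pStar s a * rbar s a
      = pStar s a * qStar s a + rcStar s a * (pStar s a * cbar s a)
        - γ * (pStar s a * ∑ s', τ s a s' * vStar s') := by
    intro s a
    have he := hq_eq s a
    rw [hexp rcStar vStar s a] at he
    linear_combination (-(pStar s a)) * he
  have hpq : ∀ s, ∑ a, pStar s a * qStar s a
      = dStar s * vStar s - ∑ a, pStar s a * (vStar s - qStar s a) := by
    intro s
    rw [show (∑ a, pStar s a * qStar s a)
        = ∑ a, (pStar s a * vStar s - pStar s a * (vStar s - qStar s a)) from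
      Finset.sum_congr rfl fun a _ => by ring]
    rw [Finset.sum_sub_distrib, ← Finset.sum_mul, hDp_sum s]
  have hswap : ∑ s, ∑ a, pStar s a * ∑ s', τ s a s' * vStar s'
      = ∑ s', (∑ s, ∑ a, pStar s a * τ s a s') * vStar s' := by
    rw [show (∑ s, ∑ a, pStar s a * ∑ s', τ s a s' * vStar s')
        = ∑ s, ∑ a, ∑ s', pStar s a * τ s a s' * vStar s' from
      Finset.sum_congr rfl fun s _ => Finset.sum_congr rfl fun a _ => by
        rw [Finset.mul_sum]
        exact Finset.sum_congr rfl fun s' _ => by ring]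
    rw [show (∑ s, ∑ a, ∑ s', pStar s a * τ s a s' * vStar s')
        = ∑ s, ∑ s', ∑ a, pStar s a * τ s a s' * vStar s' from
      Finset.sum_congr rfl fun s _ => Finset.sum_comm]
    rw [Finset.sum_comm]
    exact Finset.sum_congr rfl fun s' _ => by
      rw [Finset.sum_mul]
      exact Finset.sum_congr rfl fun s _ => by
        rw [Finset.sum_mul]
  have hflowv : γ * ∑ s, ∑ a, pStar s a * ∑ s', τ s a s' * vStar s'
      = (∑ s', dStar s' * vStar s') - ∑ s', (1 - γ) * ι s' * vStar s' := by
    rw [hswap, Finset.mul_sum, ← Finset.sum_sub_distrib]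
    refine Finset.sum_congr rfl fun s' _ => ?_
    have hf := hDp_flow s'
    have hγp : γ * ∑ s, ∑ a, pStar s a * τ s a s'
        = dStar s' - (1 - γ) * ι s' := by
      rw [show (∑ s, ∑ a, pStar s a * τ s a s')
          = ∑ s, ∑ a, pStar s a * τ s a s' from rfl]
      linarith [hf]
    linear_combination vStar s' * hγp
  have hDob : DualObj τ r pStar
      = ∑ s, ι s * ((1 - γ) * vStar s)
        - (∑ s, ∑ a, pStar s a * (vStar s - qStar s a))
        + ∑ s, ∑ a, rcStar s a * (pStar s a * cbar s a) := by
    have hD0 : DualObj τ r pStar = ∑ s, ∑ a, pStar s a * rbar s a := rfl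
    rw [hD0,
      show (∑ s, ∑ a, pStar s a * rbar s a)
        = ∑ s, ((∑ a, pStar s a * qStar s a)
          + ((∑ a, rcStar s a * (pStar s a * cbar s a))
            - γ * ∑ a, pStar s a * ∑ s', τ s a s' * vStar s')) from
      Finset.sum_congr rfl fun s _ => by
        rw [show (∑ a, pStar s a * rbar s a)
            = ∑ a, (pStar s a * qStar s a + rcStar s a * (pStar s a * cbar s a)
              - γ * (pStar s a * ∑ s', τ s a s' * vStar s')) from
          Finset.sum_congr rfl fun a _ => h1 s a]
        rw [Finset.sum_sub_distrib, Finset.sum_add_distrib, ← Finset.mul_sum]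
        ring]
    rw [Finset.sum_add_distrib, Finset.sum_sub_distrib, ← Finset.mul_sum]
    rw [hflowv, Finset.sum_congr rfl fun s (_ : s ∈ Finset.univ) => hpq s,
      Finset.sum_sub_distrib]
    rw [heq1γ vStar]
    rw [show (∑ s', (1 - γ) * ι s' * vStar s') = (1 - γ) * ∑ s, ι s * vStar s from by
      rw [Finset.mul_sum]
      exact Finset.sum_congr rfl fun s _ => by ring]
    ring
  have hA1nn : ∀ s ∈ Finset.univ, (0:ℝ) ≤ ∑ a, pStar s a * (vStar s - qStar s a) := by
    intro s _
    exact Finset.sum_nonneg fun a _ =>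
      mul_nonneg (hDp_nonneg s a) (sub_nonneg.mpr (hq_le s a))
  have hA2np : ∀ s ∈ Finset.univ, (∑ a, rcStar s a * (pStar s a * cbar s a)) ≤ 0 := by
    intro s _
    exact Finset.sum_nonpos fun a _ =>
      mul_nonpos_of_nonneg_of_nonpos (hrc0 s a) (hDtc s a)
  have hA10 : ∑ s, ∑ a, pStar s a * (vStar s - qStar s a) = 0 := by
    have hA1 : 0 ≤ ∑ s, ∑ a, pStar s a * (vStar s - qStar s a) :=
      Finset.sum_nonneg hA1nn
    have hA2 : (∑ s, ∑ a, rcStar s a * (pStar s a * cbar s a)) ≤ 0 :=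
      Finset.sum_nonpos hA2np
    linarith [hsd, hDob]
  have hA20 : ∑ s, ∑ a, rcStar s a * (pStar s a * cbar s a) = 0 := by
    have hA1 : 0 ≤ ∑ s, ∑ a, pStar s a * (vStar s - qStar s a) :=
      Finset.sum_nonneg hA1nn
    have hA2 : (∑ s, ∑ a, rcStar s a * (pStar s a * cbar s a)) ≤ 0 :=
      Finset.sum_nonpos hA2np
    linarith [hsd, hDob]
  have hterm1 : ∀ s a, pStar s a * (vStar s - qStar s a) = 0 := by
    intro s a
    have houter := (Finset.sum_eq_zero_iff_of_nonneg hA1nn).mp hA10 s (Finset.mem_univ s)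
    exact (Finset.sum_eq_zero_iff_of_nonneg fun a _ =>
      mul_nonneg (hDp_nonneg s a) (sub_nonneg.mpr (hq_le s a))).mp houter a (Finset.mem_univ a)
  have hterm2 : ∀ s a, rcStar s a * (pStar s a * cbar s a) = 0 := by
    intro s a
    have houter := (Finset.sum_eq_zero_iff_of_nonpos hA2np).mp hA20 s (Finset.mem_univ s)
    exact (Finset.sum_eq_zero_iff_of_nonpos fun a _ =>
      mul_nonpos_of_nonneg_of_nonpos (hrc0 s a) (hDtc s a)).mp houter a (Finset.mem_univ a)
  refine ⟨goal1, hq_eq, goal3, ?_, ?_⟩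
  · intro s a hpa a'
    have hd0 : 0 ≤ dStar s := by
      rw [← hDp_sum s]
      exact Finset.sum_nonneg fun a _ => hDp_nonneg s a
    have hdne : dStar s ≠ 0 := by
      intro h0
      rw [h0, div_zero] at hpa
      exact lt_irrefl 0 hpa
    have hdpos : 0 < dStar s := lt_of_le_of_ne hd0 (Ne.symm hdne)
    have hppos : 0 < pStar s a := by
      rcases div_pos_iff.mp hpa with ⟨h1, _⟩ | ⟨_, h2⟩
      · exact h1
      · linarith
    have h1 := hterm1 s a
    rcases mul_eq_zero.mp h1 with h2 | h2
    · linarith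
    · have h3 : qStar s a = vStar s := by linarith
      rw [h3]
      exact hq_le s a'
  · intro s a hp hc
    have h1 := hterm2 s a
    have h2 : pStar s a * cbar s a < 0 := mul_neg_of_pos_of_neg hp hc
    rcases mul_eq_zero.mp h1 with h3 | h3
    · exact h3
    · linarith
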